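/- There exists a constant C > 0 such that for every ζ ∈ [−N, 0) and every real u ∈ (−√2·k₀, −k₀/2] ∪ [k₀/2, ∞), the point k = k₀ + u·e^{iπ/4} satisfies C⁻¹ ≤ |δ(ζ, k)| ≤ C; i.e. both δ(ζ,k) and δ(ζ,k)⁻¹ are uniformly bounded on the ray γ = {k₀ + u e^{iπ/4} : u ∈ (−√2 k₀, −k₀/2] ∪ [k₀/2, ∞)}, uniformly with respect to ζ ∈ I. (This is the key estimate (4.13) in the proof of the paper's Lemma 4.1, restricted to the ray γ.) -/

import Mathlib

open Set MeasureTheory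

noncomputable section

/-- `k₀(ζ) = √(-ζ/12)`. -/
def k0 (ζ : ℝ) : ℝ := Real.sqrt (-ζ / 12)

/-- `δ(ζ,k) = exp( (1/(2πi)) ∫_{-k₀}^{k₀} L(s)/(s - k) ds )`. -/
def delta (L : ℝ → ℂ) (ζ : ℝ) (k : ℂ) : ℂ :=
  Complex.exp ((2 * Real.pi * Complex.I)⁻¹ *
    ∫ s in (-(k0 ζ))..(k0 ζ), L s / ((s : ℂ) - k))

/-- `e^{iπ/4}`. -/
def e4 : ℂ := Complex.exp (Real.pi * Complex.I / 4)

lemma e4_im : e4.im = Real.sqrt 2 / 2 := by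
  have h : (↑Real.pi * Complex.I / 4 : ℂ) = ((Real.pi / 4 : ℝ) : ℂ) * Complex.I := by
    push_cast; ring
  rw [e4, h, Complex.exp_ofReal_mul_I_im, Real.sin_pi_div_four]

/-- Estimate (4.13): δ(ζ,·)^{±1} is uniformly bounded on the ray
γ = {k₀ + u e^{iπ/4} : u ∈ (-√2 k₀, -k₀/2] ∪ [k₀/2, ∞)}, uniformly for ζ ∈ [-N,0). -/
theorem delta_uniformly_bounded_on_ray (N : ℝ) (hN : 0 < N) (L : ℝ → ℂ)
    (hL : ContDiffOn ℝ 1 L (Icc (-Real.sqrt (N / 12)) (Real.sqrt (N / 12))))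
    (hsym : ∀ s ∈ Icc (-Real.sqrt (N / 12)) (Real.sqrt (N / 12)),
      L (-s) = starRingEnd ℂ (L s)) :
    ∃ C : ℝ, 0 < C ∧ ∀ ζ ∈ Ico (-N) (0 : ℝ), ∀ u : ℝ,
      u ∈ Ioc (-(Real.sqrt 2 * k0 ζ)) (-(k0 ζ / 2)) ∪ Ici (k0 ζ / 2) →
      C⁻¹ ≤ ‖delta L ζ ((k0 ζ : ℂ) + (u : ℂ) * e4)‖ ∧
      ‖delta L ζ ((k0 ζ : ℂ) + (u : ℂ) * e4)‖ ≤ C := by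
  obtain ⟨M, hM⟩ := isCompact_Icc.exists_bound_of_continuousOn hL.continuousOn
  set M' := max M 0 with hM'def
  have hM'0 : 0 ≤ M' := le_max_right _ _
  set B := (2 * Real.pi)⁻¹ * (4 * Real.sqrt 2 * M') with hBdef
  refine ⟨Real.exp B, Real.exp_pos _, ?_⟩
  intro ζ hζ u hu
  set K := Real.sqrt (N / 12) with hKdef
  set kk := k0 ζ with hkkdef
  have hkkpos : 0 < kk := Real.sqrt_pos.mpr (by linarith [hζ.2])
  have hkkK : kk ≤ K := Real.sqrt_le_sqrt (by linarith [hζ.1])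
  have hu2 : kk / 2 ≤ |u| := by
    rcases hu with h | h
    · exact le_abs.mpr (Or.inr (by linarith [h.2]))
    · exact le_abs.mpr (Or.inl h)
  set k : ℂ := (kk : ℂ) + (u : ℂ) * e4 with hkdef
  have him : k.im = u * (Real.sqrt 2 / 2) := by
    simp [hkdef, e4_im]
  have hs2 : (0:ℝ) < Real.sqrt 2 := by positivity
  have hd : kk * (Real.sqrt 2 / 4) ≤ |k.im| := by
    rw [him, abs_mul, abs_of_nonneg (by positivity : (0:ℝ) ≤ Real.sqrt 2 / 2)]
    nlinarith
  have hdpos : 0 < kk * (Real.sqrt 2 / 4) := by positivity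
  have hbound : ∀ s ∈ Set.uIoc (-kk) kk,
      ‖L s / ((s : ℂ) - k)‖ ≤ M' / (kk * (Real.sqrt 2 / 4)) := by
    intro s hs
    rw [Set.uIoc_of_le (by linarith : -kk ≤ kk)] at hs
    have hsmem : s ∈ Icc (-K) K := ⟨by linarith [hs.1], le_trans hs.2 hkkK⟩
    have h1 : ‖L s‖ ≤ M' := le_trans (hM s hsmem) (le_max_left _ _)
    have h2 : kk * (Real.sqrt 2 / 4) ≤ ‖(s : ℂ) - k‖ := by
      calc kk * (Real.sqrt 2 / 4) ≤ |k.im| := hd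
        _ = |((s : ℂ) - k).im| := by simp
        _ ≤ ‖(s : ℂ) - k‖ := Complex.abs_im_le_norm _
    rw [norm_div]
    exact div_le_div₀ hM'0 h1 hdpos h2
  have hint : ‖∫ s in (-kk)..kk, L s / ((s : ℂ) - k)‖ ≤
      (M' / (kk * (Real.sqrt 2 / 4))) * |kk - (-kk)| :=
    intervalIntegral.norm_integral_le_of_norm_le_const hbound
  have habs : |kk - (-kk)| = 2 * kk := by
    rw [abs_of_nonneg (by linarith)]; ring
  have hsq : Real.sqrt 2 * Real.sqrt 2 = 2 := Real.mul_self_sqrt (by norm_num)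
  have heq : (M' / (kk * (Real.sqrt 2 / 4))) * (2 * kk) = 4 * Real.sqrt 2 * M' := by
    field_simp
    linear_combination (-M')*hsq
  have hint2 : ‖∫ s in (-kk)..kk, L s / ((s : ℂ) - k)‖ ≤ 4 * Real.sqrt 2 * M' := by
    rw [habs, heq] at hint; exact hint
  set z : ℂ := (2 * Real.pi * Complex.I)⁻¹ * ∫ s in (-kk)..kk, L s / ((s : ℂ) - k) with hzdef
  have hnorminv : ‖((2 * Real.pi * Complex.I)⁻¹ : ℂ)‖ = (2 * Real.pi)⁻¹ := by
    rw [norm_inv]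
    simp [norm_mul, Complex.norm_I, Complex.norm_real, abs_of_pos Real.pi_pos]
  have hz : ‖z‖ ≤ B := by
    rw [hzdef, norm_mul, hnorminv, hBdef]
    exact mul_le_mul_of_nonneg_left hint2 (by positivity)
  have hre : |z.re| ≤ B := le_trans (Complex.abs_re_le_norm z) hz
  have hdel : delta L ζ k = Complex.exp z := rfl
  rw [hdel, Complex.norm_exp]
  constructor
  · rw [← Real.exp_neg]
    exact Real.exp_le_exp.mpr (by linarith [abs_le.mp hre])
  · exact Real.exp_le_exp.mpr (by linarith [abs_le.mp hre])
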